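/- Let (Ω, μ) be a measure space, p_M > 0 and C ≥ 0. For each integer k ≥ 2 let p_k : Ω → ℝ be measurable with 0 ≤ p_k ≤ p_M μ-almost everywhere and ∫_Ω p_k dμ ≤ C. Suppose that p_k → p weakly in L²(μ) and that the functions p_k^{k/(k−1)} converge strongly in L²(μ) to some function χ as k → ∞. Then χ = p μ-almost everywhere and p_k → p strongly in L²(μ). -/

import Mathlib

open MeasureTheory Filter RealInnerProductSpace

private lemma key_growth {pM x β : ℝ} (hx0 : 0 ≤ x) (hxM : x ≤ pM)
    (hβ0 : 0 < β) (hβ1 : β ≤ 1) :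
    x ^ (1 + β) ≤ max 1 pM * x := by
  rcases eq_or_lt_of_le hx0 with h0 | h0
  · rw [← h0, Real.zero_rpow (by positivity), mul_zero]
  · have hM1 : (1:ℝ) ≤ max 1 pM := le_max_left _ _
    have hxβ : x ^ β ≤ max 1 pM := by
      calc x ^ β ≤ (max 1 pM) ^ β :=
            Real.rpow_le_rpow hx0 (le_trans hxM (le_max_right _ _)) hβ0.le
        _ ≤ (max 1 pM) ^ (1:ℝ) := Real.rpow_le_rpow_of_exponent_le hM1 hβ1
        _ = max 1 pM := Real.rpow_one _
    calc x ^ (1 + β) = x * x ^ β := by rw [Real.rpow_add h0, Real.rpow_one]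
      _ ≤ x * max 1 pM := mul_le_mul_of_nonneg_left hxβ hx0
      _ = max 1 pM * x := mul_comm _ _

private lemma key_abs_le' {pM x β : ℝ} (hx0 : 0 ≤ x) (hxM : x ≤ pM)
    (hβ0 : 0 < β) (hβ1 : β ≤ 1) :
    |x ^ (1 + β) - x| ≤ (max 1 pM + 1) * x := by
  have h1 := key_growth hx0 hxM hβ0 hβ1
  have h2 : 0 ≤ x ^ (1 + β) := Real.rpow_nonneg hx0 _
  rw [abs_le]
  constructor <;> nlinarith

private lemma key_abs_le {pM x β : ℝ} (hpM : 0 < pM) (hx0 : 0 ≤ x) (hxM : x ≤ pM)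
    (hβ0 : 0 < β) (hβ1 : β ≤ 1) :
    |x ^ (1 + β) - x| ≤ β * (1 + pM * max 1 pM * max 1 pM) := by
  set M := max 1 pM with hMdef
  have hM1 : (1:ℝ) ≤ M := le_max_left _ _
  have hMp : pM ≤ M := le_max_right _ _
  have hK1 : (1:ℝ) ≤ 1 + pM * M * M := by
    nlinarith [mul_pos hpM (mul_pos (lt_of_lt_of_le one_pos hM1) (lt_of_lt_of_le one_pos hM1))]
  rcases le_or_gt x 1 with hx1 | hx1
  · rcases eq_or_lt_of_le hx0 with h0 | h0
    · rw [← h0, Real.zero_rpow (by positivity), sub_zero, abs_zero]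
      positivity
    · have hxle : x ^ (1 + β) ≤ x := by
        calc x ^ (1 + β) ≤ x ^ (1:ℝ) :=
              Real.rpow_le_rpow_of_exponent_ge h0 hx1 (by linarith)
          _ = x := Real.rpow_one x
      rw [abs_of_nonpos (by linarith), neg_sub]
      have hsplit : x ^ (1 + β) = x * x ^ β := by
        rw [Real.rpow_add h0, Real.rpow_one]
      have hexp : Real.log x * β + 1 ≤ x ^ β := by
        rw [Real.rpow_def_of_pos h0]
        exact Real.add_one_le_exp _
      have hlogx : -Real.log x ≤ x⁻¹ - 1 := by
        have := Real.log_le_sub_one_of_pos (inv_pos.mpr h0)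
        rwa [Real.log_inv] at this
      have hxinv : x * x⁻¹ = 1 := mul_inv_cancel₀ h0.ne'
      have t1 : x * (Real.log x * β + 1) ≤ x * x ^ β :=
        mul_le_mul_of_nonneg_left hexp h0.le
      have t2 : (β * x) * (-Real.log x) ≤ (β * x) * (x⁻¹ - 1) :=
        mul_le_mul_of_nonneg_left hlogx (by positivity)
      rw [hsplit]
      nlinarith
  · have hpM1 : (1:ℝ) ≤ pM := le_trans hx1.le hxM
    have hxge : x ≤ x ^ (1 + β) := by
      calc x = x ^ (1:ℝ) := (Real.rpow_one x).symm
        _ ≤ x ^ (1 + β) := Real.rpow_le_rpow_of_exponent_le hx1.le (by linarith)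
    rw [abs_of_nonneg (by linarith)]
    have hsplit : x ^ (1 + β) = x * x ^ β := by
      rw [Real.rpow_add (by linarith : (0:ℝ) < x), Real.rpow_one]
    have hxβ1 : 1 ≤ x ^ β := Real.one_le_rpow hx1.le hβ0.le
    have hxβle : x ^ β ≤ pM ^ β := Real.rpow_le_rpow hx0 hxM hβ0.le
    set t := Real.log pM * β with htdef
    have ht0 : 0 ≤ t := mul_nonneg (Real.log_nonneg hpM1) hβ0.le
    have hpMβ : pM ^ β = Real.exp t := Real.rpow_def_of_pos hpM β
    have hE : (1 - t) * Real.exp t ≤ 1 := by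
      have h1 : -t + 1 ≤ Real.exp (-t) := Real.add_one_le_exp _
      have h2 : Real.exp (-t) * Real.exp t = 1 := by
        rw [← Real.exp_add]; simp
      nlinarith [Real.exp_pos t]
    have hB : pM ^ β - 1 ≤ t * pM ^ β := by rw [hpMβ]; nlinarith
    have hlogpM : Real.log pM ≤ pM - 1 := Real.log_le_sub_one_of_pos hpM
    have hpMβle : pM ^ β ≤ pM := by
      calc pM ^ β ≤ pM ^ (1:ℝ) := Real.rpow_le_rpow_of_exponent_le hpM1 hβ1
        _ = pM := Real.rpow_one _
    have hA : x * x ^ β - x ≤ pM * (pM ^ β - 1) := by nlinarith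
    have hC : t * pM ^ β ≤ β * (pM - 1) * pM := by
      have u1 : t * pM ^ β ≤ t * pM := mul_le_mul_of_nonneg_left hpMβle ht0
      have u2 : t * pM ≤ ((pM - 1) * β) * pM :=
        mul_le_mul_of_nonneg_right (mul_le_mul_of_nonneg_right hlogpM hβ0.le) hpM.le
      nlinarith
    have h5 : pM * (pM ^ β - 1) ≤ pM * (t * pM ^ β) := mul_le_mul_of_nonneg_left hB hpM.le
    have h6 : pM * (t * pM ^ β) ≤ pM * (β * (pM - 1) * pM) := mul_le_mul_of_nonneg_left hC hpM.le
    have h7 : (pM - 1) * pM ≤ M * M :=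
      mul_le_mul (by linarith) hMp hpM.le (by linarith)
    have h8 : β * pM * ((pM - 1) * pM) ≤ β * pM * (M * M) :=
      mul_le_mul_of_nonneg_left h7 (by positivity)
    rw [hsplit]
    nlinarith

private lemma integral_sq_sub_eq {Ω : Type*} [MeasurableSpace Ω] {μ : Measure Ω} {f g : Ω → ℝ}
    (hf : MemLp f 2 μ) (hg : MemLp g 2 μ) :
    ∫ ω, (f ω - g ω) ^ 2 ∂μ = ‖hf.toLp f - hg.toLp g‖ ^ 2 := by
  rw [← MemLp.toLp_sub, ← real_inner_self_eq_norm_sq, MeasureTheory.L2.inner_def]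
  refine integral_congr_ae ?_
  filter_upwards [(hf.sub hg).coeFn_toLp] with ω hω
  simp [hω, RCLike.inner_apply, sq]

private lemma integral_mul_eq_inner {Ω : Type*} [MeasurableSpace Ω] {μ : Measure Ω} {f g : Ω → ℝ}
    (hf : MemLp f 2 μ) (hg : MemLp g 2 μ) :
    ∫ ω, f ω * g ω ∂μ = ⟪hf.toLp f, hg.toLp g⟫ := by
  rw [MeasureTheory.L2.inner_def]
  refine (integral_congr_ae ?_).symm
  filter_upwards [hf.coeFn_toLp, hg.coeFn_toLp] with ω h1 h2
  simp [h1, h2, RCLike.inner_apply, mul_comm]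

private lemma tendsto_norm_of_sq {E : Type*} [NormedAddCommGroup E] {u : ℕ → E}
    (h : Tendsto (fun k => ‖u k‖ ^ 2) atTop (nhds 0)) :
    Tendsto (fun k => ‖u k‖) atTop (nhds 0) := by
  have h2 := (Real.continuous_sqrt.tendsto 0).comp h
  simp only [Real.sqrt_zero] at h2
  refine h2.congr fun k => ?_
  exact Real.sqrt_sq (norm_nonneg _)

/-- uniform `L¹` and `L^∞` bounds on the pressures `p_k`, weak `L²`
convergence `p_k ⇀ p`, and strong `L²` convergence of `φ_k(p_k) = p_k^{k/(k−1)}` to some `χ`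
imply `χ = p` a.e. and that `p_k → p` strongly in `L²(μ)`. -/
theorem pressure_strong_compactness {Ω : Type*} [MeasurableSpace Ω] (μ : Measure Ω)
    (pM C : ℝ) (hpM : 0 < pM) (hC : 0 ≤ C)
    (p : ℕ → Ω → ℝ) (plim χ : Ω → ℝ)
    (hpmeas : ∀ k, Measurable (p k))
    (hpbdd : ∀ k, 2 ≤ k → ∀ᵐ ω ∂μ, p k ω ∈ Set.Icc (0 : ℝ) pM)
    (hpL1 : ∀ k, 2 ≤ k → Integrable (p k) μ)
    (hpint : ∀ k, 2 ≤ k → ∫ ω, p k ω ∂μ ≤ C)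
    (hplim : MemLp plim 2 μ) (hχ : MemLp χ 2 μ)
    (hweak : ∀ g : Ω → ℝ, MemLp g 2 μ →
      Tendsto (fun k : ℕ => ∫ ω, p k ω * g ω ∂μ) atTop (nhds (∫ ω, plim ω * g ω ∂μ)))
    (hstrong : Tendsto
      (fun k : ℕ => ∫ ω, (p k ω ^ ((k : ℝ) / ((k : ℝ) - 1)) - χ ω) ^ 2 ∂μ)
      atTop (nhds 0)) :
    (∀ᵐ ω ∂μ, χ ω = plim ω) ∧
    Tendsto (fun k : ℕ => ∫ ω, (p k ω - plim ω) ^ 2 ∂μ) atTop (nhds 0) := by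
  classical
  set M : ℝ := max 1 pM with hMdef
  have hM1 : (1:ℝ) ≤ M := le_max_left _ _
  set K : ℝ := 1 + pM * M * M with hKdef
  have hK1 : (1:ℝ) ≤ K := by
    have : 0 < pM * M * M := by positivity
    simp only [hKdef]; linarith
  -- exponent facts
  have hkfacts : ∀ k : ℕ, 2 ≤ k →
      (0 < 1 / ((k:ℝ) - 1) ∧ 1 / ((k:ℝ) - 1) ≤ 1 ∧
        (k:ℝ) / ((k:ℝ) - 1) = 1 + 1 / ((k:ℝ) - 1)) := by
    intro k hk
    have h2 : (2:ℝ) ≤ (k:ℝ) := by exact_mod_cast hk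
    have hk1 : (1:ℝ) ≤ (k:ℝ) - 1 := by linarith
    have hk0 : (0:ℝ) < (k:ℝ) - 1 := by linarith
    refine ⟨div_pos one_pos hk0, (div_le_one hk0).mpr hk1, ?_⟩
    field_simp
    ring
  -- measurability of q k
  have hqmeas : ∀ k : ℕ, Measurable (fun ω => p k ω ^ ((k:ℝ) / ((k:ℝ) - 1))) := by
    intro k
    rcases le_or_gt 2 k with hk | hk
    · have h0 : (0:ℝ) ≤ (k:ℝ) / ((k:ℝ) - 1) := by
        obtain ⟨hβ0, hβ1, hα⟩ := hkfacts k hk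
        rw [hα]; linarith
      exact (Real.continuous_rpow_const h0).measurable.comp (hpmeas k)
    · interval_cases k
      · simpa using measurable_const
      · simpa using measurable_const
  -- membership in L²
  have memp : ∀ k : ℕ, 2 ≤ k → MemLp (p k) 2 μ := by
    intro k hk
    refine (memLp_two_iff_integrable_sq (hpmeas k).aestronglyMeasurable).2 ?_
    refine ((hpL1 k hk).const_mul pM).mono
      ((hpmeas k).pow_const 2).aestronglyMeasurable ?_
    filter_upwards [hpbdd k hk] with ω hω
    obtain ⟨h0, h1⟩ := hω
    rw [Real.norm_eq_abs, Real.norm_eq_abs, abs_of_nonneg (by positivity),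
      abs_of_nonneg (by positivity)]
    nlinarith
  have memq : ∀ k : ℕ, 2 ≤ k → MemLp (fun ω => p k ω ^ ((k:ℝ) / ((k:ℝ) - 1))) 2 μ := by
    intro k hk
    obtain ⟨hβ0, hβ1, hα⟩ := hkfacts k hk
    refine (memLp_two_iff_integrable_sq (hqmeas k).aestronglyMeasurable).2 ?_
    refine ((hpL1 k hk).const_mul (M * M * pM)).mono
      ((hqmeas k).pow_const 2).aestronglyMeasurable ?_
    filter_upwards [hpbdd k hk] with ω hω
    obtain ⟨h0, h1⟩ := hω
    have hgrow : p k ω ^ ((k:ℝ) / ((k:ℝ) - 1)) ≤ M * p k ω := by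
      rw [hα]; exact key_growth h0 h1 hβ0 hβ1
    have hq0 : 0 ≤ p k ω ^ ((k:ℝ) / ((k:ℝ) - 1)) := Real.rpow_nonneg h0 _
    rw [Real.norm_eq_abs, Real.norm_eq_abs, abs_of_nonneg (by positivity),
      abs_of_nonneg (by positivity)]
    have hM0 : (0:ℝ) ≤ M := le_trans zero_le_one hM1
    nlinarith [mul_le_mul hgrow hgrow hq0 (mul_nonneg hM0 h0),
      mul_nonneg (mul_nonneg (mul_nonneg hM0 hM0) h0) (by linarith : (0:ℝ) ≤ pM - p k ω)]
  -- key integral bound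
  have hkey : ∀ k : ℕ, 2 ≤ k →
      ∫ ω, (p k ω ^ ((k:ℝ) / ((k:ℝ) - 1)) - p k ω) ^ 2 ∂μ ≤
        (1 / ((k:ℝ) - 1)) * (K * ((M + 1) * C)) := by
    intro k hk
    obtain ⟨hβ0, hβ1, hα⟩ := hkfacts k hk
    have habs : ∀ᵐ ω ∂μ,
        |p k ω ^ ((k:ℝ) / ((k:ℝ) - 1)) - p k ω| ≤ (M + 1) * p k ω := by
      filter_upwards [hpbdd k hk] with ω hω
      obtain ⟨h0, h1⟩ := hω
      rw [hα]
      exact key_abs_le' h0 h1 hβ0 hβ1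
    have hkeyabs : ∀ᵐ ω ∂μ,
        |p k ω ^ ((k:ℝ) / ((k:ℝ) - 1)) - p k ω| ≤ (1 / ((k:ℝ) - 1)) * K := by
      filter_upwards [hpbdd k hk] with ω hω
      obtain ⟨h0, h1⟩ := hω
      rw [hα]
      exact key_abs_le hpM h0 h1 hβ0 hβ1
    have hdmeas : Measurable (fun ω => p k ω ^ ((k:ℝ) / ((k:ℝ) - 1)) - p k ω) :=
      (hqmeas k).sub (hpmeas k)
    have hI1 : Integrable (fun ω => p k ω ^ ((k:ℝ) / ((k:ℝ) - 1)) - p k ω) μ := by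
      refine ((hpL1 k hk).const_mul (M + 1)).mono hdmeas.aestronglyMeasurable ?_
      filter_upwards [habs, hpbdd k hk] with ω hω h2
      obtain ⟨hp0, hp1⟩ := h2
      rw [Real.norm_eq_abs, Real.norm_eq_abs,
        abs_of_nonneg (mul_nonneg (by linarith : (0:ℝ) ≤ M + 1) hp0)]
      exact hω
    have hI2 : Integrable (fun ω =>
        ((1 / ((k:ℝ) - 1)) * K) * |p k ω ^ ((k:ℝ) / ((k:ℝ) - 1)) - p k ω|) μ :=
      hI1.abs.const_mul _
    have step1 : ∫ ω, (p k ω ^ ((k:ℝ) / ((k:ℝ) - 1)) - p k ω) ^ 2 ∂μ ≤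
        ∫ ω, ((1 / ((k:ℝ) - 1)) * K) * |p k ω ^ ((k:ℝ) / ((k:ℝ) - 1)) - p k ω| ∂μ := by
      refine integral_mono_ae ?_ hI2 ?_
      · refine hI2.mono (hdmeas.pow_const 2).aestronglyMeasurable ?_
        filter_upwards [hkeyabs] with ω hω
        rw [Real.norm_eq_abs, Real.norm_eq_abs, abs_of_nonneg (by positivity)]
        have h0 : 0 ≤ |p k ω ^ ((k:ℝ) / ((k:ℝ) - 1)) - p k ω| := abs_nonneg _
        rw [abs_of_nonneg (mul_nonneg (by positivity) h0)]
        calc (p k ω ^ ((k:ℝ) / ((k:ℝ) - 1)) - p k ω) ^ 2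
            = |p k ω ^ ((k:ℝ) / ((k:ℝ) - 1)) - p k ω| *
              |p k ω ^ ((k:ℝ) / ((k:ℝ) - 1)) - p k ω| := by
              rw [sq, ← abs_mul_abs_self]
          _ ≤ ((1 / ((k:ℝ) - 1)) * K) * |p k ω ^ ((k:ℝ) / ((k:ℝ) - 1)) - p k ω| :=
              mul_le_mul_of_nonneg_right hω h0
      · filter_upwards [hkeyabs] with ω hω
        have h0 : 0 ≤ |p k ω ^ ((k:ℝ) / ((k:ℝ) - 1)) - p k ω| := abs_nonneg _
        calc (p k ω ^ ((k:ℝ) / ((k:ℝ) - 1)) - p k ω) ^ 2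
            = |p k ω ^ ((k:ℝ) / ((k:ℝ) - 1)) - p k ω| *
              |p k ω ^ ((k:ℝ) / ((k:ℝ) - 1)) - p k ω| := by
              rw [sq, ← abs_mul_abs_self]
          _ ≤ ((1 / ((k:ℝ) - 1)) * K) * |p k ω ^ ((k:ℝ) / ((k:ℝ) - 1)) - p k ω| :=
              mul_le_mul_of_nonneg_right hω h0
    have step2 : ∫ ω, ((1 / ((k:ℝ) - 1)) * K) *
        |p k ω ^ ((k:ℝ) / ((k:ℝ) - 1)) - p k ω| ∂μ =
        ((1 / ((k:ℝ) - 1)) * K) * ∫ ω, |p k ω ^ ((k:ℝ) / ((k:ℝ) - 1)) - p k ω| ∂μ :=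
      integral_const_mul _ _
    have step3 : ∫ ω, |p k ω ^ ((k:ℝ) / ((k:ℝ) - 1)) - p k ω| ∂μ ≤
        ∫ ω, (M + 1) * p k ω ∂μ := by
      refine integral_mono_ae hI1.abs ((hpL1 k hk).const_mul (M + 1)) habs
    have step4 : ∫ ω, (M + 1) * p k ω ∂μ ≤ (M + 1) * C := by
      rw [integral_const_mul]
      exact mul_le_mul_of_nonneg_left (hpint k hk) (by linarith)
    have hc0 : (0:ℝ) ≤ (1 / ((k:ℝ) - 1)) * K := by positivity
    calc ∫ ω, (p k ω ^ ((k:ℝ) / ((k:ℝ) - 1)) - p k ω) ^ 2 ∂μ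
        ≤ ((1 / ((k:ℝ) - 1)) * K) * ∫ ω, |p k ω ^ ((k:ℝ) / ((k:ℝ) - 1)) - p k ω| ∂μ := by
          rw [← step2]; exact step1
      _ ≤ ((1 / ((k:ℝ) - 1)) * K) * ((M + 1) * C) :=
          mul_le_mul_of_nonneg_left (le_trans step3 step4) hc0
      _ = (1 / ((k:ℝ) - 1)) * (K * ((M + 1) * C)) := by ring
  -- Lp elements
  set X : Lp ℝ 2 μ := hχ.toLp χ with hXdef
  set L : Lp ℝ 2 μ := hplim.toLp plim with hLdef
  set P : ℕ → Lp ℝ 2 μ :=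
    fun k => if h : 2 ≤ k then (memp k h).toLp (p k) else 0 with hPdef
  set Q : ℕ → Lp ℝ 2 μ :=
    fun k => if h : 2 ≤ k then
      (memq k h).toLp (fun ω => p k ω ^ ((k:ℝ) / ((k:ℝ) - 1))) else 0 with hQdef
  have hPeq : ∀ k (hk : 2 ≤ k), P k = (memp k hk).toLp (p k) := by
    intro k hk; simp [hPdef, dif_pos hk]
  have hQeq : ∀ k (hk : 2 ≤ k),
      Q k = (memq k hk).toLp (fun ω => p k ω ^ ((k:ℝ) / ((k:ℝ) - 1))) := by
    intro k hk; simp [hQdef, dif_pos hk]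
  -- strong convergence Q → X
  have hQX2 : Tendsto (fun k => ‖Q k - X‖ ^ 2) atTop (nhds 0) := by
    refine Tendsto.congr' ?_ hstrong
    filter_upwards [eventually_ge_atTop 2] with k hk
    rw [hQeq k hk]
    exact integral_sq_sub_eq (memq k hk) hχ
  have hQXnorm : Tendsto (fun k => ‖Q k - X‖) atTop (nhds 0) := tendsto_norm_of_sq hQX2
  -- P - Q → 0
  have hβtend : Tendsto (fun k : ℕ => 1 / ((k:ℝ) - 1)) atTop (nhds 0) := by
    have h1 : Tendsto (fun k : ℕ => (k:ℝ) + (-1)) atTop atTop :=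
      tendsto_atTop_add_const_right atTop (-1 : ℝ) tendsto_natCast_atTop_atTop
    have h2 : Tendsto (fun k : ℕ => (k:ℝ) - 1) atTop atTop := by
      refine h1.congr fun k => ?_
      ring
    have h3 := h2.inv_tendsto_atTop
    refine h3.congr fun k => ?_
    simp [one_div]
  have hbound : Tendsto (fun k : ℕ => (1 / ((k:ℝ) - 1)) * (K * ((M + 1) * C)))
      atTop (nhds 0) := by
    simpa using hβtend.mul_const (K * ((M + 1) * C))
  have hPQ2 : Tendsto (fun k => ‖P k - Q k‖ ^ 2) atTop (nhds 0) := by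
    refine tendsto_of_tendsto_of_tendsto_of_le_of_le' tendsto_const_nhds hbound
      (Eventually.of_forall fun k => by positivity) ?_
    filter_upwards [eventually_ge_atTop 2] with k hk
    rw [hPeq k hk, hQeq k hk]
    calc ‖(memp k hk).toLp (p k) -
          (memq k hk).toLp (fun ω => p k ω ^ ((k:ℝ) / ((k:ℝ) - 1)))‖ ^ 2
        = ‖(memq k hk).toLp (fun ω => p k ω ^ ((k:ℝ) / ((k:ℝ) - 1))) -
          (memp k hk).toLp (p k)‖ ^ 2 := by rw [norm_sub_rev]
      _ = ∫ ω, (p k ω ^ ((k:ℝ) / ((k:ℝ) - 1)) - p k ω) ^ 2 ∂μ :=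
          (integral_sq_sub_eq (memq k hk) (memp k hk)).symm
      _ ≤ _ := hkey k hk
  have hPQnorm : Tendsto (fun k => ‖P k - Q k‖) atTop (nhds 0) := tendsto_norm_of_sq hPQ2
  -- P → X
  have hPXnorm : Tendsto (fun k => ‖P k - X‖) atTop (nhds 0) := by
    have hadd : Tendsto (fun k => ‖P k - Q k‖ + ‖Q k - X‖) atTop (nhds 0) := by
      simpa using hPQnorm.add hQXnorm
    refine tendsto_of_tendsto_of_tendsto_of_le_of_le' tendsto_const_nhds hadd
      (Eventually.of_forall fun k => norm_nonneg _)
      (Eventually.of_forall fun k => ?_)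
    have := dist_triangle (P k) (Q k) X
    simpa [dist_eq_norm] using this
  have hP : Tendsto P atTop (nhds X) := by
    rw [tendsto_iff_norm_sub_tendsto_zero]
    exact hPXnorm
  -- identification of weak limit
  have hG : MemLp (χ - plim) 2 μ := hχ.sub hplim
  have hw : Tendsto (fun k : ℕ => ∫ ω, p k ω * (χ - plim) ω ∂μ) atTop
      (nhds (∫ ω, plim ω * (χ - plim) ω ∂μ)) := hweak (χ - plim) hG
  have h2 : Tendsto (fun k : ℕ => ∫ ω, p k ω * (χ - plim) ω ∂μ) atTop
      (nhds ⟪X, hG.toLp (χ - plim)⟫) := by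
    have hin : Tendsto (fun k => (⟪P k, hG.toLp (χ - plim)⟫ : ℝ)) atTop
        (nhds ⟪X, hG.toLp (χ - plim)⟫) := hP.inner tendsto_const_nhds
    refine Tendsto.congr' ?_ hin
    filter_upwards [eventually_ge_atTop 2] with k hk
    rw [hPeq k hk]
    exact (integral_mul_eq_inner (memp k hk) hG).symm
  have hXG : (⟪X, hG.toLp (χ - plim)⟫ : ℝ) = ∫ ω, plim ω * (χ - plim) ω ∂μ :=
    tendsto_nhds_unique h2 hw
  have hLG : (∫ ω, plim ω * (χ - plim) ω ∂μ) = ⟪L, hG.toLp (χ - plim)⟫ :=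
    integral_mul_eq_inner hplim hG
  have hGl : hG.toLp (χ - plim) = X - L := MemLp.toLp_sub _ _
  have hzero : (⟪X - L, X - L⟫ : ℝ) = 0 := by
    rw [inner_sub_left, ← hGl, hXG, hLG, sub_self]
  have hXL : X = L := sub_eq_zero.mp (inner_self_eq_zero.mp hzero)
  have hae : χ =ᵐ[μ] plim := (MemLp.toLp_eq_toLp_iff hχ hplim).mp hXL
  refine ⟨hae, ?_⟩
  have hfin : Tendsto (fun k => ‖P k - X‖ ^ 2) atTop (nhds 0) := by
    simpa using hPXnorm.pow 2
  refine Tendsto.congr' ?_ hfin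
  filter_upwards [eventually_ge_atTop 2] with k hk
  rw [hXL, hPeq k hk]
  exact (integral_sq_sub_eq (memp k hk) hplim).symm
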